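/- Let M, X, Y be pairwise disjoint finite sets and let f_X, f_Y be polymatroids on M∪X and M∪Y whose restrictions to subsets of M coincide. If the tightened polymatroids f_X↓X and f_Y↓Y have an amalgam, then f_X and f_Y have an amalgam as well. -/

import Mathlib

open Finset

noncomputable section

variable {α : Type*} [DecidableEq α]

/-- `f` is a polymatroid with ground set `M`: it vanishes on `∅` and is
non-negative, monotone and submodular on subsets of `M`. -/
def IsPolymatroid (M : Finset α) (f : Finset α → ℝ) : Prop :=
  f ∅ = 0 ∧
  (∀ A, A ⊆ M → 0 ≤ f A) ∧
  (∀ A B, A ⊆ B → B ⊆ M → f A ≤ f B) ∧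
  (∀ A B, A ⊆ M → B ⊆ M → f (A ∪ B) + f (A ∩ B) ≤ f A + f B)

/-- `pmi f I J K` is the expression `f(I,J|K) = f(I∪K)+f(J∪K)−f(I∪J∪K)−f(K)`. -/
def pmi (f : Finset α → ℝ) (I J K : Finset α) : ℝ :=
  f (I ∪ K) + f (J ∪ K) - f (I ∪ J ∪ K) - f K

/-- `pcd f I K` is the expression `f(I|K) = f(I∪K) − f(K)`. -/
def pcd (f : Finset α → ℝ) (I K : Finset α) : ℝ := f (I ∪ K) - f K

/-- `runit A` is the rank function `r_A`: `r_A(I) = 1` if `A ∩ I ≠ ∅`, else `0`. -/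
def runit (A I : Finset α) : ℝ := if (A ∩ I).Nonempty then 1 else 0

/-- Tightening of `f` at `a` (relative to ground set `M`):
`f↓a = f − f(a|M∖{a})·r_{{a}}`. -/
def tightenAt (M : Finset α) (f : Finset α → ℝ) (a : α) : Finset α → ℝ :=
  fun I => f I - pcd f {a} (M \ {a}) * runit {a} I

/-- Polymatroids `fX` on `M ∪ X` and `fY` on `M ∪ Y` have an amalgam: a common
polymatroid extension on `M ∪ X ∪ Y`. -/
def HaveAmalgam (M X Y : Finset α) (fX fY : Finset α → ℝ) : Prop :=
  ∃ g : Finset α → ℝ, IsPolymatroid (M ∪ X ∪ Y) g ∧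
    (∀ A, A ⊆ M ∪ X → g A = fX A) ∧ (∀ A, A ⊆ M ∪ Y → g A = fY A)

/-- Polymatroids `fX` on `M ∪ X` and `fY` on `M ∪ Y` are adhesive: they have a
modular common extension, i.e. one with `g(X,Y|M) = 0`. -/
def Adhesive (M X Y : Finset α) (fX fY : Finset α → ℝ) : Prop :=
  ∃ g : Finset α → ℝ, IsPolymatroid (M ∪ X ∪ Y) g ∧
    (∀ A, A ⊆ M ∪ X → g A = fX A) ∧ (∀ A, A ⊆ M ∪ Y → g A = fY A) ∧
    pmi g X Y M = 0


lemma runit_eq (a : α) (I : Finset α) : runit {a} I = if a ∈ I then 1 else 0 := by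
  unfold runit
  congr 1
  simp [Finset.Nonempty, Finset.mem_inter]

lemma runit_nonneg (a : α) (I : Finset α) : 0 ≤ runit {a} I := by
  rw [runit_eq]; split <;> norm_num

lemma runit_empty (a : α) : runit {a} (∅ : Finset α) = 0 := by
  simp [runit_eq]

lemma runit_mono (a : α) {A B : Finset α} (h : A ⊆ B) :
    runit {a} A ≤ runit {a} B := by
  rw [runit_eq, runit_eq]
  by_cases hA : a ∈ A
  · simp [hA, h hA]
  · simp [hA]; split <;> norm_num

lemma runit_submod (a : α) (A B : Finset α) :
    runit {a} (A ∪ B) + runit {a} (A ∩ B) ≤ runit {a} A + runit {a} B := by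
  simp only [runit_eq, Finset.mem_union, Finset.mem_inter]
  by_cases hA : a ∈ A <;> by_cases hB : a ∈ B <;> simp [hA, hB]

lemma foldl_tightenAt (G : Finset α) (l : List α) :
    ∀ (f : Finset α → ℝ), l.Nodup → (∀ a ∈ l, a ∈ G) →
    ∀ I, l.foldl (tightenAt G) f I
      = f I - ∑ a ∈ l.toFinset, pcd f {a} (G \ {a}) * runit {a} I := by
  induction l with
  | nil => intro f _ _ I; simp
  | cons a l ih =>
    intro f hnd hsub I
    have hanl : a ∉ l := (List.nodup_cons.mp hnd).1
    have haG : a ∈ G := hsub a (List.mem_cons_self (a := a) (l := l))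
    have step : List.foldl (tightenAt G) f (a :: l)
        = List.foldl (tightenAt G) (tightenAt G f a) l := rfl
    rw [step, ih (tightenAt G f a) (List.nodup_cons.mp hnd).2
        (fun b hb => hsub b (List.mem_cons_of_mem a hb)) I]
    have hpcd : ∀ b ∈ l.toFinset,
        pcd (tightenAt G f a) {b} (G \ {b}) = pcd f {b} (G \ {b}) := by
      intro b hb
      have hba : a ≠ b := by
        intro hh; exact hanl (hh ▸ List.mem_toFinset.mp hb)
      have haGb : a ∈ G \ {b} := by
        simp [Finset.mem_sdiff, haG, hba]
      have h1 : runit {a} ({b} ∪ (G \ {b})) = 1 := by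
        rw [runit_eq, if_pos (Finset.mem_union_right _ haGb)]
      have h2 : runit {a} (G \ {b}) = 1 := by
        rw [runit_eq, if_pos haGb]
      simp only [pcd, tightenAt, h1, h2]
      ring
    rw [Finset.sum_congr rfl (fun b hb => by rw [hpcd b hb])]
    have : l.toFinset.sum (fun b => pcd f {b} (G \ {b}) * runit {b} I)
        = (∑ b ∈ (a :: l).toFinset, pcd f {b} (G \ {b}) * runit {b} I)
          - pcd f {a} (G \ {a}) * runit {a} I := by
      rw [List.toFinset_cons, Finset.sum_insert (by simpa using hanl)]
      ring
    rw [this]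
    simp only [tightenAt]
    ring

/-- if the tightened polymatroids `f_X↓X` and `f_Y↓Y` (successive
tightening along duplicate-free lists enumerating `X` and `Y`) have an amalgam,
then so do `f_X` and `f_Y`. -/
theorem statement_8 (M X Y : Finset α)
    (hMX : Disjoint M X) (hMY : Disjoint M Y) (hXY : Disjoint X Y)
    (fX fY : Finset α → ℝ)
    (hfX : IsPolymatroid (M ∪ X) fX) (hfY : IsPolymatroid (M ∪ Y) fY)
    (hcommon : ∀ A ⊆ M, fX A = fY A)
    (lX lY : List α) (hlX : lX.Nodup) (hlXs : lX.toFinset = X)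
    (hlY : lY.Nodup) (hlYs : lY.toFinset = Y)
    (h : HaveAmalgam M X Y (lX.foldl (tightenAt (M ∪ X)) fX)
          (lY.foldl (tightenAt (M ∪ Y)) fY)) :
    HaveAmalgam M X Y fX fY := by
  obtain ⟨g, ⟨hg0, hgnn, hgmono, hgsub⟩, hgX, hgY⟩ := h
  set c : α → ℝ := fun a =>
    if a ∈ X then pcd fX {a} ((M ∪ X) \ {a}) else pcd fY {a} ((M ∪ Y) \ {a})
    with hcdef
  have hcX : ∀ a ∈ X, c a = pcd fX {a} ((M ∪ X) \ {a}) := by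
    intro a ha; simp [hcdef, ha]
  have hcY : ∀ a ∈ Y, c a = pcd fY {a} ((M ∪ Y) \ {a}) := by
    intro a ha
    have hax : a ∉ X := fun hax => (Finset.disjoint_left.mp hXY hax) ha
    simp [hcdef, hax]
  have hc_nonneg : ∀ a ∈ X ∪ Y, 0 ≤ c a := by
    intro a ha
    rcases Finset.mem_union.mp ha with haX | haY
    · rw [hcX a haX]
      have h1 : (M ∪ X) \ {a} ⊆ {a} ∪ ((M ∪ X) \ {a}) := Finset.subset_union_right
      have h2 : {a} ∪ ((M ∪ X) \ {a}) ⊆ M ∪ X :=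
        Finset.union_subset (by simpa using Finset.mem_union_right M haX)
          (Finset.sdiff_subset)
      have := hfX.2.2.1 _ _ h1 h2
      simp only [pcd]; linarith
    · rw [hcY a haY]
      have h1 : (M ∪ Y) \ {a} ⊆ {a} ∪ ((M ∪ Y) \ {a}) := Finset.subset_union_right
      have h2 : {a} ∪ ((M ∪ Y) \ {a}) ⊆ M ∪ Y :=
        Finset.union_subset (by simpa using Finset.mem_union_right M haY)
          (Finset.sdiff_subset)
      have := hfY.2.2.1 _ _ h1 h2
      simp only [pcd]; linarith
  refine ⟨fun I => g I + ∑ a ∈ X ∪ Y, c a * runit {a} I, ⟨?_, ?_, ?_, ?_⟩, ?_, ?_⟩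
  · simp [hg0, runit_empty]
  · intro A hA
    exact add_nonneg (hgnn A hA)
      (Finset.sum_nonneg fun a ha => mul_nonneg (hc_nonneg a ha) (runit_nonneg a A))
  · intro A B hAB hBG
    exact add_le_add (hgmono A B hAB hBG)
      (Finset.sum_le_sum fun a ha =>
        mul_le_mul_of_nonneg_left (runit_mono a hAB) (hc_nonneg a ha))
  · intro A B hA hB
    have h1 := hgsub A B hA hB
    have h2 : (∑ a ∈ X ∪ Y, c a * runit {a} (A ∪ B))
        + (∑ a ∈ X ∪ Y, c a * runit {a} (A ∩ B))
        ≤ (∑ a ∈ X ∪ Y, c a * runit {a} A) + (∑ a ∈ X ∪ Y, c a * runit {a} B) := by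
      rw [← Finset.sum_add_distrib, ← Finset.sum_add_distrib]
      refine Finset.sum_le_sum fun a ha => ?_
      have h := mul_le_mul_of_nonneg_left (runit_submod a A B) (hc_nonneg a ha)
      rw [mul_add, mul_add] at h
      exact h
    simp only
    linarith
  · intro A hA
    have hsub : ∀ a ∈ lX, a ∈ M ∪ X := fun a ha =>
      Finset.mem_union_right M (hlXs ▸ List.mem_toFinset.mpr ha)
    have hg' : g A = fX A - ∑ a ∈ X, pcd fX {a} ((M ∪ X) \ {a}) * runit {a} A := by
      rw [hgX A hA, foldl_tightenAt (M ∪ X) lX fX hlX hsub A, hlXs]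
    have hsplit : ∑ a ∈ X ∪ Y, c a * runit {a} A
        = (∑ a ∈ X, c a * runit {a} A) + ∑ a ∈ Y, c a * runit {a} A :=
      Finset.sum_union hXY
    have hYzero : ∑ a ∈ Y, c a * runit {a} A = 0 := by
      refine Finset.sum_eq_zero fun a ha => ?_
      have haA : a ∉ A := by
        intro haA
        rcases Finset.mem_union.mp (hA haA) with hm | hx
        · exact (Finset.disjoint_left.mp hMY hm) ha
        · exact (Finset.disjoint_left.mp hXY hx) ha
      rw [runit_eq, if_neg haA, mul_zero]
    have hXeq : ∑ a ∈ X, c a * runit {a} A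
        = ∑ a ∈ X, pcd fX {a} ((M ∪ X) \ {a}) * runit {a} A :=
      Finset.sum_congr rfl fun a ha => by rw [hcX a ha]
    simp only
    rw [hg', hsplit, hYzero, hXeq]
    ring
  · intro A hA
    have hsub : ∀ a ∈ lY, a ∈ M ∪ Y := fun a ha =>
      Finset.mem_union_right M (hlYs ▸ List.mem_toFinset.mpr ha)
    have hg' : g A = fY A - ∑ a ∈ Y, pcd fY {a} ((M ∪ Y) \ {a}) * runit {a} A := by
      rw [hgY A hA, foldl_tightenAt (M ∪ Y) lY fY hlY hsub A, hlYs]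
    have hsplit : ∑ a ∈ X ∪ Y, c a * runit {a} A
        = (∑ a ∈ X, c a * runit {a} A) + ∑ a ∈ Y, c a * runit {a} A :=
      Finset.sum_union hXY
    have hXzero : ∑ a ∈ X, c a * runit {a} A = 0 := by
      refine Finset.sum_eq_zero fun a ha => ?_
      have haA : a ∉ A := by
        intro haA
        rcases Finset.mem_union.mp (hA haA) with hm | hy
        · exact (Finset.disjoint_left.mp hMX hm) ha
        · exact (Finset.disjoint_left.mp hXY ha) hy
      rw [runit_eq, if_neg haA, mul_zero]
    have hYeq : ∑ a ∈ Y, c a * runit {a} A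
        = ∑ a ∈ Y, pcd fY {a} ((M ∪ Y) \ {a}) * runit {a} A :=
      Finset.sum_congr rfl fun a ha => by rw [hcY a ha]
    simp only
    rw [hg', hsplit, hXzero, hYeq]
    ring
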